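/- Let F = K * L be the free product of two groups and φ : F → K × L the natural epimorphism. For every c ≥ 1, the kernel of the induced map φ̄_c : F/γ_{c+1}(F) → (K/γ_{c+1}(K)) × (L/γ_{c+1}(L)) is isomorphic to [K, L]^F / [K, L, _{c-1} F]^F, i.e., the image of the normal closure of [K, L] in F modulo its intersection with γ_{c+1}(F), where [K, L, _{c-1} F]^F denotes the normal closure of the (c-1)-fold iterated commutator subgroup [[K,L],F,...,F]. -/

import Mathlib

open Monoid Coprod
open scoped commutatorElement

/-- The natural epimorphism `K ∗ L →* K × L`. -/
noncomputable def natProj (K L : Type*) [Group K] [Group L] :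
    (K ∗ L) →* K × L :=
  Monoid.Coprod.lift (MonoidHom.inl K L) (MonoidHom.inr K L)

/-- `[K, L, _m F]^F` : the normal closure in `F = K ∗ L` of the left-normed iterated
commutator subgroup `[[K,L],F,…,F]` (`m` copies of `F`), where `K`, `L` are identified
with their canonical images in `F`. -/
noncomputable def iterComm (K L : Type*) [Group K] [Group L] : ℕ → Subgroup (K ∗ L)
  | 0 => Subgroup.normalClosure
      (⁅((Coprod.inl : K →* K ∗ L).range), ((Coprod.inr : L →* K ∗ L).range)⁆ : Subgroup (K ∗ L))
  | m + 1 => Subgroup.normalClosure (⁅iterComm K L m, (⊤ : Subgroup (K ∗ L))⁆ : Subgroup (K ∗ L))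

instance (K L : Type*) [Group K] [Group L] (m : ℕ) : (iterComm K L m).Normal := by
  cases m <;> [exact Subgroup.normalClosure_normal; exact Subgroup.normalClosure_normal]

namespace KerIsoAux

open Subgroup

section CommIdent
variable {G : Type*} [Group G] (g h x y z a f : G)

theorem comm_mul_right : ⁅g, x * y⁆ = ⁅g, x⁆ * (x * ⁅g, y⁆ * x⁻¹) := by
  simp only [commutatorElement_def]; group

theorem comm_mul_left : ⁅g * h, f⁆ = g * ⁅h, f⁆ * g⁻¹ * ⁅g, f⁆ := by
  simp only [commutatorElement_def]; group

theorem comm_inv_left : ⁅g⁻¹, f⁆ = g⁻¹ * ⁅g, f⁆⁻¹ * g := by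
  simp only [commutatorElement_def]; group

theorem conj_eq_mul_comm : g * a * g⁻¹ = a * ⁅a⁻¹, g⁆ := by
  simp only [commutatorElement_def]; group

end CommIdent

/-- Three subgroups lemma for a normal target. -/
theorem three_subgroups {G : Type*} [Group G] {H₁ H₂ H₃ N : Subgroup G} [N.Normal]
    (h1 : ⁅⁅H₂, H₃⁆, H₁⁆ ≤ N) (h2 : ⁅⁅H₃, H₁⁆, H₂⁆ ≤ N) : ⁅⁅H₁, H₂⁆, H₃⁆ ≤ N := by
  have key : ∀ A B C : Subgroup G, ⁅⁅A, B⁆, C⁆ ≤ N ↔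
      ⁅⁅A.map (QuotientGroup.mk' N), B.map (QuotientGroup.mk' N)⁆,
        C.map (QuotientGroup.mk' N)⁆ = ⊥ := by
    intro A B C
    rw [← Subgroup.map_commutator, ← Subgroup.map_commutator, Subgroup.map_eq_bot_iff,
      QuotientGroup.ker_mk']
  rw [key]
  exact Subgroup.commutator_commutator_eq_bot_of_rotate ((key _ _ _).mp h1) ((key _ _ _).mp h2)

section Main
variable (K L : Type*) [Group K] [Group L]

@[simp] theorem natProj_inl (k : K) : natProj K L (Coprod.inl k) = (k, 1) := rfl

@[simp] theorem natProj_inr (l : L) : natProj K L (Coprod.inr l) = (1, l) := rfl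

theorem comm_inl_inr_mem (k : K) (l : L) :
    ⁅(Coprod.inl k : K ∗ L), Coprod.inr l⁆ ∈ iterComm K L 0 :=
  Subgroup.le_normalClosure (commutator_mem_commutator ⟨k, rfl⟩ ⟨l, rfl⟩)

theorem ker_natProj : (natProj K L).ker = iterComm K L 0 := by
  apply le_antisymm
  · -- define a section K × L →* (K ∗ L) ⧸ C
    set C := iterComm K L 0
    have comm : ∀ (k : K) (l : L),
        Commute ((QuotientGroup.mk' C).comp Coprod.inl k)
          ((QuotientGroup.mk' C).comp Coprod.inr l) := by
      intro k l
      rw [← commutatorElement_eq_one_iff_commute]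
      have : ((QuotientGroup.mk' C) ⁅(Coprod.inl k : K ∗ L), Coprod.inr l⁆ : (K ∗ L) ⧸ C) = 1 := by
        rw [← MonoidHom.mem_ker, QuotientGroup.ker_mk']
        exact comm_inl_inr_mem K L k l
      simpa [map_commutatorElement] using this
    have hcomp :
        (MonoidHom.noncommCoprod ((QuotientGroup.mk' C).comp Coprod.inl)
            ((QuotientGroup.mk' C).comp Coprod.inr) comm).comp (natProj K L) =
          QuotientGroup.mk' C := by
      apply Coprod.hom_ext <;> ext x <;>
        simp [natProj, MonoidHom.noncommCoprod_apply]
    intro x hx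
    have : (QuotientGroup.mk' C) x = 1 := by
      rw [← hcomp]
      simp [MonoidHom.mem_ker.mp hx]
    rwa [QuotientGroup.mk'_apply, QuotientGroup.eq_one_iff] at this
  · apply Subgroup.normalClosure_le_normal
    rw [SetLike.coe_subset_coe, commutator_le]
    rintro x ⟨k, rfl⟩ y ⟨l, rfl⟩
    rw [MonoidHom.mem_ker, map_commutatorElement]
    simp only [natProj_inl, natProj_inr]
    rw [commutatorElement_eq_one_iff_commute]
    show ((k, 1) : K × L) * (1, l) = (1, l) * (k, 1)
    simp [Prod.mul_def]

theorem decomp (x : K ∗ L) :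
    ∃ z ∈ iterComm K L 0,
      x = z * Coprod.inl ((natProj K L x).1) * Coprod.inr ((natProj K L x).2) := by
  refine ⟨x * (Coprod.inl ((natProj K L x).1) * Coprod.inr ((natProj K L x).2))⁻¹, ?_, by group⟩
  rw [← ker_natProj, MonoidHom.mem_ker]
  simp [Prod.mul_def]

theorem iterComm_succ (m : ℕ) :
    iterComm K L (m + 1) = ⁅iterComm K L m, (⊤ : Subgroup (K ∗ L))⁆ := by
  show Subgroup.normalClosure _ = _
  exact Subgroup.normalClosure_eq_self _

theorem iterComm_succ_le (m : ℕ) : iterComm K L (m + 1) ≤ iterComm K L m := by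
  rw [iterComm_succ]
  exact commutator_le_left _ _

theorem iterComm_le_of_le {m n : ℕ} (h : m ≤ n) : iterComm K L n ≤ iterComm K L m :=
  antitone_nat_of_succ_le (iterComm_succ_le K L) h

theorem iterComm_le_gamma (m : ℕ) :
    iterComm K L m ≤ (⊤ : Subgroup (K ∗ L)).lowerCentralSeries (m + 1) := by
  induction m with
  | zero =>
    apply Subgroup.normalClosure_le_normal
    rw [SetLike.coe_subset_coe]
    calc ⁅(Coprod.inl : K →* K ∗ L).range, (Coprod.inr : L →* K ∗ L).range⁆
        ≤ ⁅(⊤ : Subgroup (K ∗ L)), (⊤ : Subgroup (K ∗ L))⁆ := commutator_mono le_top le_top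
      _ = (⊤ : Subgroup (K ∗ L)).lowerCentralSeries 1 := rfl
  | succ m ih =>
    rw [iterComm_succ]
    calc ⁅iterComm K L m, (⊤ : Subgroup (K ∗ L))⁆
        ≤ ⁅(⊤ : Subgroup (K ∗ L)).lowerCentralSeries (m + 1), (⊤ : Subgroup (K ∗ L))⁆ :=
          commutator_mono ih le_rfl
      _ = (⊤ : Subgroup (K ∗ L)).lowerCentralSeries (m + 2) := rfl

/-- `⁅[K,L,_i F]^F, γ_{j+1} F⁆ ≤ [K,L,_{i+j+1} F]^F`. -/
theorem comm_iterComm_gamma :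
    ∀ j i : ℕ, ⁅iterComm K L i, (⊤ : Subgroup (K ∗ L)).lowerCentralSeries j⁆ ≤ iterComm K L (i + j + 1) := by
  intro j
  induction j with
  | zero =>
    intro i
    show ⁅iterComm K L i, (⊤ : Subgroup (K ∗ L)).lowerCentralSeries 0⁆ ≤ iterComm K L (i + 1)
    rw [iterComm_succ, Subgroup.lowerCentralSeries_zero]
  | succ j ih =>
    intro i
    have heq : (⊤ : Subgroup (K ∗ L)).lowerCentralSeries (j + 1) =
        ⁅(⊤ : Subgroup (K ∗ L)).lowerCentralSeries j, (⊤ : Subgroup (K ∗ L))⁆ := rfl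
    rw [commutator_comm (iterComm K L i), heq]
    have h1 : ⁅⁅(⊤ : Subgroup (K ∗ L)), iterComm K L i⁆,
        (⊤ : Subgroup (K ∗ L)).lowerCentralSeries j⁆ ≤ iterComm K L (i + (j + 1) + 1) := by
      calc ⁅⁅(⊤ : Subgroup (K ∗ L)), iterComm K L i⁆, (⊤ : Subgroup (K ∗ L)).lowerCentralSeries j⁆
          = ⁅⁅iterComm K L i, (⊤ : Subgroup (K ∗ L))⁆, (⊤ : Subgroup (K ∗ L)).lowerCentralSeries j⁆ := by
            rw [commutator_comm (⊤ : Subgroup (K ∗ L))]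
        _ = ⁅iterComm K L (i + 1), (⊤ : Subgroup (K ∗ L)).lowerCentralSeries j⁆ := by rw [← iterComm_succ]
        _ ≤ iterComm K L (i + 1 + j + 1) := ih (i + 1)
        _ = iterComm K L (i + (j + 1) + 1) := by ring_nf
    have h2 : ⁅⁅iterComm K L i, (⊤ : Subgroup (K ∗ L)).lowerCentralSeries j⁆,
        (⊤ : Subgroup (K ∗ L))⁆ ≤ iterComm K L (i + (j + 1) + 1) := by
      calc ⁅⁅iterComm K L i, (⊤ : Subgroup (K ∗ L)).lowerCentralSeries j⁆, (⊤ : Subgroup (K ∗ L))⁆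
          ≤ ⁅iterComm K L (i + j + 1), (⊤ : Subgroup (K ∗ L))⁆ := commutator_mono (ih i) le_rfl
        _ = iterComm K L (i + j + 1 + 1) := (iterComm_succ K L _).symm
        _ = iterComm K L (i + (j + 1) + 1) := by ring_nf
    exact three_subgroups h1 h2

/-- image of `γ_{n+1} K` in `K ∗ L`. -/
noncomputable abbrev gammaK (n : ℕ) : Subgroup (K ∗ L) :=
  ((⊤ : Subgroup K).lowerCentralSeries n).map (Coprod.inl : K →* K ∗ L)

noncomputable abbrev gammaL (n : ℕ) : Subgroup (K ∗ L) :=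
  ((⊤ : Subgroup L).lowerCentralSeries n).map (Coprod.inr : L →* K ∗ L)

theorem gammaK_le_gamma (n : ℕ) : gammaK K L n ≤ (⊤ : Subgroup (K ∗ L)).lowerCentralSeries n :=
  Subgroup.lowerCentralSeries.map _ n

theorem gammaL_le_gamma (n : ℕ) : gammaL K L n ≤ (⊤ : Subgroup (K ∗ L)).lowerCentralSeries n :=
  Subgroup.lowerCentralSeries.map _ n

theorem gammaK_zero : gammaK K L 0 = (Coprod.inl : K →* K ∗ L).range :=
  (MonoidHom.range_eq_map _).symm

theorem gammaL_zero : gammaL K L 0 = (Coprod.inr : L →* K ∗ L).range :=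
  (MonoidHom.range_eq_map _).symm

theorem gammaK_succ (n : ℕ) :
    gammaK K L (n + 1) = ⁅gammaK K L n, gammaK K L 0⁆ := by
  show Subgroup.map _ ⁅_, (⊤ : Subgroup K)⁆ = _
  rw [Subgroup.map_commutator]
  rfl

theorem gammaL_succ (n : ℕ) :
    gammaL K L (n + 1) = ⁅gammaL K L n, gammaL K L 0⁆ := by
  show Subgroup.map _ ⁅_, (⊤ : Subgroup L)⁆ = _
  rw [Subgroup.map_commutator]
  rfl

theorem comm_nclK_nclL_zero :
    ⁅Subgroup.normalClosure (gammaK K L 0 : Set (K ∗ L)), Subgroup.normalClosure (gammaL K L 0 : Set (K ∗ L))⁆ ≤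
      iterComm K L 0 := by
  have hK : Subgroup.normalClosure (gammaK K L 0 : Set (K ∗ L)) ≤
      ((MonoidHom.snd K L).comp (natProj K L)).ker := by
    apply Subgroup.normalClosure_le_normal
    rintro x ⟨x, hx, rfl⟩
    simp [MonoidHom.mem_ker]
  have hL : Subgroup.normalClosure (gammaL K L 0 : Set (K ∗ L)) ≤
      ((MonoidHom.fst K L).comp (natProj K L)).ker := by
    apply Subgroup.normalClosure_le_normal
    rintro x ⟨x, hx, rfl⟩
    simp [MonoidHom.mem_ker]
  rw [← ker_natProj, commutator_le]
  intro x hx y hy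
  have hx2 : (natProj K L x).2 = 1 := hK hx
  have hy1 : (natProj K L y).1 = 1 := hL hy
  rw [MonoidHom.mem_ker, map_commutatorElement, commutatorElement_eq_one_iff_commute]
  have : natProj K L x = ((natProj K L x).1, 1) := by rw [← hx2]
  rw [this]
  have : natProj K L y = (1, (natProj K L y).2) := by rw [← hy1]
  rw [this]
  show (((natProj K L x).1, 1) : K × L) * (1, (natProj K L y).2) = _ * _
  simp [Prod.mul_def]

/-- `⁅(γ_{n+1}K)^F, L^F⁆ ≤ [K,L,_n F]^F`. -/
theorem comm_nclK_nclL (n : ℕ) :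
    ⁅Subgroup.normalClosure (gammaK K L n : Set (K ∗ L)), Subgroup.normalClosure (gammaL K L 0 : Set (K ∗ L))⁆ ≤
      iterComm K L n := by
  induction n with
  | zero => exact comm_nclK_nclL_zero K L
  | succ n ih =>
    have hsub : Subgroup.normalClosure (gammaK K L (n + 1) : Set (K ∗ L)) ≤
        ⁅Subgroup.normalClosure (gammaK K L n : Set (K ∗ L)),
          Subgroup.normalClosure (gammaK K L 0 : Set (K ∗ L))⁆ := by
      apply Subgroup.normalClosure_le_normal
      rw [SetLike.coe_subset_coe, gammaK_succ]
      exact commutator_mono Subgroup.le_normalClosure Subgroup.le_normalClosure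
    refine le_trans (commutator_mono hsub le_rfl) (three_subgroups ?_ ?_)
    · -- ⁅⁅ncl γK0, ncl L⁆, ncl γK n⁆ ≤ iterComm (n+1)
      calc ⁅⁅Subgroup.normalClosure (gammaK K L 0 : Set (K ∗ L)),
              Subgroup.normalClosure (gammaL K L 0 : Set (K ∗ L))⁆,
            Subgroup.normalClosure (gammaK K L n : Set (K ∗ L))⁆
          ≤ ⁅iterComm K L 0, (⊤ : Subgroup (K ∗ L)).lowerCentralSeries n⁆ := by
            apply commutator_mono (comm_nclK_nclL_zero K L)
            · exact Subgroup.normalClosure_le_normal (SetLike.coe_subset_coe.mpr (gammaK_le_gamma K L n))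
        _ ≤ iterComm K L (0 + n + 1) := comm_iterComm_gamma K L n 0
        _ = iterComm K L (n + 1) := by rw [Nat.zero_add]
    · calc ⁅⁅Subgroup.normalClosure (gammaL K L 0 : Set (K ∗ L)),
              Subgroup.normalClosure (gammaK K L n : Set (K ∗ L))⁆,
            Subgroup.normalClosure (gammaK K L 0 : Set (K ∗ L))⁆
          ≤ ⁅iterComm K L n, (⊤ : Subgroup (K ∗ L))⁆ := by
            apply commutator_mono _ le_top
            rw [commutator_comm]
            exact ih
        _ = iterComm K L (n + 1) := (iterComm_succ K L n).symm

theorem comm_nclL_nclK (n : ℕ) :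
    ⁅Subgroup.normalClosure (gammaL K L n : Set (K ∗ L)), Subgroup.normalClosure (gammaK K L 0 : Set (K ∗ L))⁆ ≤
      iterComm K L n := by
  induction n with
  | zero =>
    rw [commutator_comm]
    exact comm_nclK_nclL_zero K L
  | succ n ih =>
    have hsub : Subgroup.normalClosure (gammaL K L (n + 1) : Set (K ∗ L)) ≤
        ⁅Subgroup.normalClosure (gammaL K L n : Set (K ∗ L)),
          Subgroup.normalClosure (gammaL K L 0 : Set (K ∗ L))⁆ := by
      apply Subgroup.normalClosure_le_normal
      rw [SetLike.coe_subset_coe, gammaL_succ]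
      exact commutator_mono Subgroup.le_normalClosure Subgroup.le_normalClosure
    refine le_trans (commutator_mono hsub le_rfl) (three_subgroups ?_ ?_)
    · calc ⁅⁅Subgroup.normalClosure (gammaL K L 0 : Set (K ∗ L)),
              Subgroup.normalClosure (gammaK K L 0 : Set (K ∗ L))⁆,
            Subgroup.normalClosure (gammaL K L n : Set (K ∗ L))⁆
          ≤ ⁅iterComm K L 0, (⊤ : Subgroup (K ∗ L)).lowerCentralSeries n⁆ := by
            apply commutator_mono
            · rw [commutator_comm]
              exact comm_nclK_nclL_zero K L
            · exact Subgroup.normalClosure_le_normal (SetLike.coe_subset_coe.mpr (gammaL_le_gamma K L n))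
        _ ≤ iterComm K L (0 + n + 1) := comm_iterComm_gamma K L n 0
        _ = iterComm K L (n + 1) := by rw [Nat.zero_add]
    · calc ⁅⁅Subgroup.normalClosure (gammaK K L 0 : Set (K ∗ L)),
              Subgroup.normalClosure (gammaL K L n : Set (K ∗ L))⁆,
            Subgroup.normalClosure (gammaL K L 0 : Set (K ∗ L))⁆
          ≤ ⁅iterComm K L n, (⊤ : Subgroup (K ∗ L))⁆ := by
            apply commutator_mono _ le_top
            rw [commutator_comm]
            exact ih
        _ = iterComm K L (n + 1) := (iterComm_succ K L n).symm

theorem inl_mem_nclK (m : ℕ) {u : K} (hu : u ∈ (⊤ : Subgroup K).lowerCentralSeries m) :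
    Coprod.inl u ∈ Subgroup.normalClosure (gammaK K L m : Set (K ∗ L)) :=
  Subgroup.subset_normalClosure ⟨u, hu, rfl⟩

theorem inr_mem_nclL (m : ℕ) {v : L} (hv : v ∈ (⊤ : Subgroup L).lowerCentralSeries m) :
    Coprod.inr v ∈ Subgroup.normalClosure (gammaL K L m : Set (K ∗ L)) :=
  Subgroup.subset_normalClosure ⟨v, hv, rfl⟩

/-- a second decomposition, with the `L`-component first. -/
theorem decomp' (x : K ∗ L) :
    ∃ z ∈ iterComm K L 0,
      x = z * Coprod.inr ((natProj K L x).2) * Coprod.inl ((natProj K L x).1) := by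
  refine ⟨x * ((Coprod.inr ((natProj K L x).2) : K ∗ L) * Coprod.inl ((natProj K L x).1))⁻¹,
    ?_, by group⟩
  rw [← ker_natProj, MonoidHom.mem_ker]
  simp [Prod.mul_def]

set_option maxHeartbeats 1000000 in
/-- conjugates of `γ_{n+1} K ≤ K ∗ L` stay in `γ_{n+1}K ⊔ [K,L,_n F]^F`. -/
theorem ncl_gammaK_le (n : ℕ) :
    Subgroup.normalClosure (gammaK K L n : Set (K ∗ L)) ≤ gammaK K L n ⊔ iterComm K L n := by
  have hMG : gammaK K L n ⊔ iterComm K L n ≤ (⊤ : Subgroup (K ∗ L)).lowerCentralSeries n :=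
    sup_le (gammaK_le_gamma K L n)
      ((iterComm_le_gamma K L n).trans (Subgroup.lowerCentralSeries_antitone ⊤ (Nat.le_succ n)))
  have : Subgroup.normalClosure (gammaK K L n : Set (K ∗ L)) =
      Subgroup.closure (Group.conjugatesOfSet (gammaK K L n : Set (K ∗ L))) := rfl
  rw [this, Subgroup.closure_le]
  intro c hc
  rw [Group.mem_conjugatesOfSet_iff] at hc
  obtain ⟨a, ha, hconj⟩ := hc
  obtain ⟨g, hg⟩ := isConj_iff.mp hconj
  obtain ⟨a0, ha0, rfl⟩ := ha
  obtain ⟨z, hz, hgdec⟩ := decomp' K L g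
  set k := (natProj K L g).1
  set l := (natProj K L g).2
  -- innermost: conjugation by inl k
  have hy1 : (Coprod.inl k : K ∗ L) * Coprod.inl a0 * (Coprod.inl k)⁻¹ =
      Coprod.inl (k * a0 * k⁻¹) := by
    simp [map_mul]
  have hy1mem : (k * a0 * k⁻¹) ∈ (⊤ : Subgroup K).lowerCentralSeries n :=
    Subgroup.Normal.conj_mem inferInstance a0 ha0 k
  -- middle: conjugation by inr l
  set y1 : K ∗ L := Coprod.inl (k * a0 * k⁻¹)
  have hy2 : (Coprod.inr l : K ∗ L) * y1 * (Coprod.inr l)⁻¹ = y1 * ⁅y1⁻¹, Coprod.inr l⁆ :=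
    conj_eq_mul_comm _ _
  have hy2c : ⁅y1⁻¹, (Coprod.inr l : K ∗ L)⁆ ∈ iterComm K L n :=
    comm_nclK_nclL K L n
      (commutator_mem_commutator (inv_mem (inl_mem_nclK K L n hy1mem))
        (inr_mem_nclL K L 0 (mem_top l)))
  set y2 : K ∗ L := y1 * ⁅y1⁻¹, Coprod.inr l⁆
  have hy2mem : y2 ∈ gammaK K L n ⊔ iterComm K L n :=
    mul_mem (mem_sup_left ⟨_, hy1mem, rfl⟩) (mem_sup_right hy2c)
  -- outermost: conjugation by z
  have hy3 : z * y2 * z⁻¹ = y2 * ⁅y2⁻¹, z⁆ := conj_eq_mul_comm _ _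
  have hy3c : ⁅y2⁻¹, z⁆ ∈ iterComm K L n := by
    have hmem : ⁅y2⁻¹, z⁆ ∈ ⁅(⊤ : Subgroup (K ∗ L)).lowerCentralSeries n, iterComm K L 0⁆ :=
      commutator_mem_commutator (inv_mem (hMG hy2mem)) hz
    rw [commutator_comm] at hmem
    exact iterComm_le_of_le K L (by omega) (comm_iterComm_gamma K L n 0 hmem)
  have hceq : c = z * ((Coprod.inr l : K ∗ L) *
      ((Coprod.inl k : K ∗ L) * Coprod.inl a0 * (Coprod.inl k)⁻¹) * (Coprod.inr l)⁻¹) * z⁻¹ := by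
    rw [← hg, hgdec]
    group
  rw [hceq, hy1, hy2, hy3]
  exact mul_mem hy2mem (mem_sup_right hy3c)

set_option maxHeartbeats 1000000 in
theorem ncl_gammaL_le (n : ℕ) :
    Subgroup.normalClosure (gammaL K L n : Set (K ∗ L)) ≤ gammaL K L n ⊔ iterComm K L n := by
  have hMG : gammaL K L n ⊔ iterComm K L n ≤ (⊤ : Subgroup (K ∗ L)).lowerCentralSeries n :=
    sup_le (gammaL_le_gamma K L n)
      ((iterComm_le_gamma K L n).trans (Subgroup.lowerCentralSeries_antitone ⊤ (Nat.le_succ n)))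
  have : Subgroup.normalClosure (gammaL K L n : Set (K ∗ L)) =
      Subgroup.closure (Group.conjugatesOfSet (gammaL K L n : Set (K ∗ L))) := rfl
  rw [this, Subgroup.closure_le]
  intro c hc
  rw [Group.mem_conjugatesOfSet_iff] at hc
  obtain ⟨a, ha, hconj⟩ := hc
  obtain ⟨g, hg⟩ := isConj_iff.mp hconj
  obtain ⟨b0, hb0, rfl⟩ := ha
  obtain ⟨z, hz, hgdec⟩ := decomp K L g
  set k := (natProj K L g).1
  set l := (natProj K L g).2
  have hy1 : (Coprod.inr l : K ∗ L) * Coprod.inr b0 * (Coprod.inr l)⁻¹ =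
      Coprod.inr (l * b0 * l⁻¹) := by
    simp [map_mul]
  have hy1mem : (l * b0 * l⁻¹) ∈ (⊤ : Subgroup L).lowerCentralSeries n :=
    Subgroup.Normal.conj_mem inferInstance b0 hb0 l
  set y1 : K ∗ L := Coprod.inr (l * b0 * l⁻¹)
  have hy2 : (Coprod.inl k : K ∗ L) * y1 * (Coprod.inl k)⁻¹ = y1 * ⁅y1⁻¹, Coprod.inl k⁆ :=
    conj_eq_mul_comm _ _
  have hy2c : ⁅y1⁻¹, (Coprod.inl k : K ∗ L)⁆ ∈ iterComm K L n :=
    comm_nclL_nclK K L n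
      (commutator_mem_commutator (inv_mem (inr_mem_nclL K L n hy1mem))
        (inl_mem_nclK K L 0 (mem_top k)))
  set y2 : K ∗ L := y1 * ⁅y1⁻¹, Coprod.inl k⁆
  have hy2mem : y2 ∈ gammaL K L n ⊔ iterComm K L n :=
    mul_mem (mem_sup_left ⟨_, hy1mem, rfl⟩) (mem_sup_right hy2c)
  have hy3 : z * y2 * z⁻¹ = y2 * ⁅y2⁻¹, z⁆ := conj_eq_mul_comm _ _
  have hy3c : ⁅y2⁻¹, z⁆ ∈ iterComm K L n := by
    have hmem : ⁅y2⁻¹, z⁆ ∈ ⁅(⊤ : Subgroup (K ∗ L)).lowerCentralSeries n, iterComm K L 0⁆ :=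
      commutator_mem_commutator (inv_mem (hMG hy2mem)) hz
    rw [commutator_comm] at hmem
    exact iterComm_le_of_le K L (by omega) (comm_iterComm_gamma K L n 0 hmem)
  have hceq : c = z * ((Coprod.inl k : K ∗ L) *
      ((Coprod.inr l : K ∗ L) * Coprod.inr b0 * (Coprod.inr l)⁻¹) * (Coprod.inl k)⁻¹) * z⁻¹ := by
    rw [← hg, hgdec]
    group
  rw [hceq, hy1, hy2, hy3]
  exact mul_mem hy2mem (mem_sup_right hy3c)

theorem comm_LK_mem (m : ℕ) {x y : K ∗ L}
    (hx : x ∈ Subgroup.normalClosure (gammaL K L 0 : Set (K ∗ L)))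
    (hy : y ∈ Subgroup.normalClosure (gammaK K L m : Set (K ∗ L))) : ⁅x, y⁆ ∈ iterComm K L m := by
  have h := commutator_mem_commutator hx hy
  rw [commutator_comm] at h
  exact comm_nclK_nclL K L m h

set_option maxHeartbeats 1000000 in
theorem mem_sup_decomp (m m' : ℕ) (hm : m' ≤ m) {x : K ∗ L}
    (hx : x ∈ gammaK K L m ⊔ gammaL K L m ⊔ iterComm K L m') :
    ∃ u ∈ (⊤ : Subgroup K).lowerCentralSeries m, ∃ v ∈ (⊤ : Subgroup L).lowerCentralSeries m, ∃ d ∈ iterComm K L m',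
      x = Coprod.inl u * Coprod.inr v * d := by
  have hDm : iterComm K L m ≤ iterComm K L m' := iterComm_le_of_le K L hm
  let P : K ∗ L → Prop := fun x => ∃ u ∈ (⊤ : Subgroup K).lowerCentralSeries m, ∃ v ∈ (⊤ : Subgroup L).lowerCentralSeries m,
      ∃ d ∈ iterComm K L m', x = Coprod.inl u * Coprod.inr v * d
  have hmul : ∀ {x y : K ∗ L}, P x → P y → P (x * y) := by
    rintro x y ⟨u, hu, v, hv, d, hd, rfl⟩ ⟨u', hu', v', hv', d', hd', rfl⟩
    have hc1 : ⁅((Coprod.inr v : K ∗ L))⁻¹, ((Coprod.inl u' : K ∗ L))⁻¹⁆ ∈ iterComm K L m' :=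
      hDm (comm_LK_mem K L m (inv_mem (inr_mem_nclL K L 0 (mem_top v)))
        (inv_mem (inl_mem_nclK K L m hu')))
    refine ⟨u * u', mul_mem hu hu', v * v', mul_mem hv hv',
      ((Coprod.inr v' : K ∗ L))⁻¹ * (⁅((Coprod.inr v : K ∗ L))⁻¹, ((Coprod.inl u' : K ∗ L))⁻¹⁆ *
        (((Coprod.inl u' : K ∗ L))⁻¹ * d * (((Coprod.inl u' : K ∗ L))⁻¹)⁻¹)) *
        (((Coprod.inr v' : K ∗ L))⁻¹)⁻¹ * d', ?_, ?_⟩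
    · exact mul_mem
        (Subgroup.Normal.conj_mem inferInstance _
          (mul_mem hc1 (Subgroup.Normal.conj_mem inferInstance d hd _)) _) hd'
    · simp only [map_mul, commutatorElement_def]
      group
  have hinv : ∀ {x : K ∗ L}, P x → P x⁻¹ := by
    rintro x ⟨u, hu, v, hv, d, hd, rfl⟩
    have hc1 : ⁅(Coprod.inr v : K ∗ L), (Coprod.inl u : K ∗ L)⁆ ∈ iterComm K L m' :=
      hDm (comm_LK_mem K L m (inr_mem_nclL K L 0 (mem_top v)) (inl_mem_nclK K L m hu))
    refine ⟨u⁻¹, inv_mem hu, v⁻¹, inv_mem hv,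
      (((Coprod.inr v : K ∗ L) * (Coprod.inl u : K ∗ L)) * d⁻¹ *
        ((Coprod.inr v : K ∗ L) * (Coprod.inl u : K ∗ L))⁻¹) *
        ⁅(Coprod.inr v : K ∗ L), (Coprod.inl u : K ∗ L)⁆, ?_, ?_⟩
    · exact mul_mem (Subgroup.Normal.conj_mem inferInstance _ (inv_mem hd) _) hc1
    · simp only [map_mul, map_inv, commutatorElement_def]
      group
  let S : Subgroup (K ∗ L) :=
    { carrier := setOf P
      one_mem' := ⟨1, one_mem _, 1, one_mem _, 1, one_mem _, by simp⟩
      mul_mem' := fun ha hb => hmul ha hb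
      inv_mem' := fun ha => hinv ha }
  have hle : gammaK K L m ⊔ gammaL K L m ⊔ iterComm K L m' ≤ S := by
    refine sup_le (sup_le ?_ ?_) ?_
    · rintro _ ⟨u, hu, rfl⟩
      exact ⟨u, hu, 1, one_mem _, 1, one_mem _, by simp⟩
    · rintro _ ⟨v, hv, rfl⟩
      exact ⟨1, one_mem _, v, hv, 1, one_mem _, by simp⟩
    · intro d hd
      exact ⟨1, one_mem _, 1, one_mem _, d, hd, by simp⟩
  exact hle hx

set_option maxHeartbeats 1000000 in
/-- The key fact: `[K,L]^F ∩ γ_{n+2}(F) = [K,L,_{n} F]^F`. -/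
theorem crux (n : ℕ) :
    iterComm K L 0 ⊓ (⊤ : Subgroup (K ∗ L)).lowerCentralSeries (n + 1) ≤ iterComm K L n := by
  induction n with
  | zero => exact inf_le_left
  | succ n ih =>
    -- Step 1: structure of `Γ (n+1)`
    have hstruct : (⊤ : Subgroup (K ∗ L)).lowerCentralSeries (n + 1) ≤
        gammaK K L (n + 1) ⊔ gammaL K L (n + 1) ⊔ iterComm K L n := by
      intro x hx
      obtain ⟨z, hz, hxe⟩ := decomp K L x
      set a := (natProj K L x).1 with hadef
      set b := (natProj K L x).2 with hbdef
      have hmap : natProj K L x ∈ (⊤ : Subgroup (K × L)).lowerCentralSeries (n + 1) :=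
        Subgroup.lowerCentralSeries.map (natProj K L) (n + 1) ⟨x, hx, rfl⟩
      rw [Subgroup.top_lowerCentralSeries_prod, Subgroup.mem_prod] at hmap
      rw [← hadef, ← hbdef] at hmap
      have hinlmem : (Coprod.inl a : K ∗ L) ∈ (⊤ : Subgroup (K ∗ L)).lowerCentralSeries (n + 1) :=
        gammaK_le_gamma K L (n + 1) ⟨_, hmap.1, rfl⟩
      have hinrmem : (Coprod.inr b : K ∗ L) ∈ (⊤ : Subgroup (K ∗ L)).lowerCentralSeries (n + 1) :=
        gammaL_le_gamma K L (n + 1) ⟨_, hmap.2, rfl⟩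
      have hzeq : z = x * (Coprod.inr b : K ∗ L)⁻¹ * (Coprod.inl a : K ∗ L)⁻¹ := by
        rw [hxe]; group
      have hzmem : z ∈ iterComm K L 0 ⊓ (⊤ : Subgroup (K ∗ L)).lowerCentralSeries (n + 1) := by
        refine Subgroup.mem_inf.mpr ⟨hz, ?_⟩
        rw [hzeq]
        exact mul_mem (mul_mem hx (inv_mem hinrmem)) (inv_mem hinlmem)
      rw [hxe]
      exact mul_mem (mul_mem (mem_sup_right (ih hzmem))
        (mem_sup_left (mem_sup_left ⟨_, hmap.1, rfl⟩)))
        (mem_sup_left (mem_sup_right ⟨_, hmap.2, rfl⟩))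
    -- Step 2: `Γ (n+2) ≤ T`
    set T := Subgroup.normalClosure (gammaK K L (n + 2) : Set (K ∗ L)) ⊔
        Subgroup.normalClosure (gammaL K L (n + 2) : Set (K ∗ L)) ⊔ iterComm K L (n + 1) with hTdef
    haveI hTnormal : T.Normal := by rw [hTdef]; infer_instance
    have hT1 : Subgroup.normalClosure (gammaK K L (n + 2) : Set (K ∗ L)) ≤ T :=
      le_sup_left.trans le_sup_left
    have hT2 : Subgroup.normalClosure (gammaL K L (n + 2) : Set (K ∗ L)) ≤ T :=
      le_sup_right.trans le_sup_left
    have hT3 : iterComm K L (n + 1) ≤ T := le_sup_right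
    have hQK : ∀ a ∈ (⊤ : Subgroup K).lowerCentralSeries (n + 1), ∀ f : K ∗ L,
        ⁅(Coprod.inl a : K ∗ L), f⁆ ∈ T := by
      intro a ha f
      obtain ⟨z, hz, hfe⟩ := decomp K L f
      set k := (natProj K L f).1 with hkdef
      set l := (natProj K L f).2 with hldef
      have hfe' : f = z * ((Coprod.inl k : K ∗ L) * Coprod.inr l) := by
        rw [hfe]; rw [mul_assoc]
      rw [hfe', comm_mul_right]
      apply mul_mem
      · have hmem : ⁅(Coprod.inl a : K ∗ L), z⁆ ∈
            ⁅(⊤ : Subgroup (K ∗ L)).lowerCentralSeries (n + 1), iterComm K L 0⁆ :=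
          commutator_mem_commutator (gammaK_le_gamma K L (n + 1) ⟨a, ha, rfl⟩) hz
        rw [commutator_comm] at hmem
        exact hT3 (iterComm_le_of_le K L (by omega) (comm_iterComm_gamma K L (n + 1) 0 hmem))
      · apply hTnormal.conj_mem _ _ z
        rw [comm_mul_right]
        apply mul_mem
        · have heq : ⁅(Coprod.inl a : K ∗ L), (Coprod.inl k : K ∗ L)⁆ =
              Coprod.inl ⁅a, k⁆ := (map_commutatorElement _ _ _).symm
          rw [heq]
          exact hT1 (Subgroup.subset_normalClosure
            ⟨⁅a, k⁆, commutator_mem_commutator ha (mem_top _), rfl⟩)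
        · apply hTnormal.conj_mem
          exact hT3 (comm_nclK_nclL K L (n + 1)
            (commutator_mem_commutator (inl_mem_nclK K L (n + 1) ha)
              (inr_mem_nclL K L 0 (mem_top _))))
    have hQL : ∀ b ∈ (⊤ : Subgroup L).lowerCentralSeries (n + 1), ∀ f : K ∗ L,
        ⁅(Coprod.inr b : K ∗ L), f⁆ ∈ T := by
      intro b hb f
      obtain ⟨z, hz, hfe⟩ := decomp' K L f
      set k := (natProj K L f).1 with hkdef
      set l := (natProj K L f).2 with hldef
      have hfe' : f = z * ((Coprod.inr l : K ∗ L) * Coprod.inl k) := by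
        rw [hfe]; rw [mul_assoc]
      rw [hfe', comm_mul_right]
      apply mul_mem
      · have hmem : ⁅(Coprod.inr b : K ∗ L), z⁆ ∈
            ⁅(⊤ : Subgroup (K ∗ L)).lowerCentralSeries (n + 1), iterComm K L 0⁆ :=
          commutator_mem_commutator (gammaL_le_gamma K L (n + 1) ⟨b, hb, rfl⟩) hz
        rw [commutator_comm] at hmem
        exact hT3 (iterComm_le_of_le K L (by omega) (comm_iterComm_gamma K L (n + 1) 0 hmem))
      · apply hTnormal.conj_mem _ _ z
        rw [comm_mul_right]
        apply mul_mem
        · have heq : ⁅(Coprod.inr b : K ∗ L), (Coprod.inr l : K ∗ L)⁆ =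
              Coprod.inr ⁅b, l⁆ := (map_commutatorElement _ _ _).symm
          rw [heq]
          exact hT2 (Subgroup.subset_normalClosure
            ⟨⁅b, l⁆, commutator_mem_commutator hb (mem_top _), rfl⟩)
        · apply hTnormal.conj_mem
          exact hT3 (comm_nclL_nclK K L (n + 1)
            (commutator_mem_commutator (inr_mem_nclL K L (n + 1) hb)
              (inl_mem_nclK K L 0 (mem_top _))))
    have hQD : ∀ d ∈ iterComm K L n, ∀ f : K ∗ L, ⁅d, f⁆ ∈ T := by
      intro d hd f
      have hmem : ⁅d, f⁆ ∈ ⁅iterComm K L n, (⊤ : Subgroup (K ∗ L)).lowerCentralSeries 0⁆ :=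
        commutator_mem_commutator hd (mem_top f)
      exact hT3 (comm_iterComm_gamma K L 0 n hmem)
    -- assemble `Sf`
    let Sf : Subgroup (K ∗ L) :=
      { carrier := {g | ∀ f : K ∗ L, ⁅g, f⁆ ∈ T}
        one_mem' := by
          intro f
          simp only [commutatorElement_one_left]
          exact one_mem T
        mul_mem' := by
          intro g h hg hh f
          rw [comm_mul_left]
          exact mul_mem (hTnormal.conj_mem _ (hh f) g) (hg f)
        inv_mem' := by
          intro g hg f
          rw [comm_inv_left]
          simpa using hTnormal.conj_mem _ (inv_mem (hg f)) g⁻¹ }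
    have hSf : gammaK K L (n + 1) ⊔ gammaL K L (n + 1) ⊔ iterComm K L n ≤ Sf := by
      refine sup_le (sup_le ?_ ?_) ?_
      · rintro _ ⟨a, ha, rfl⟩
        exact hQK a ha
      · rintro _ ⟨b, hb, rfl⟩
        exact hQL b hb
      · intro d hd
        exact hQD d hd
    have hgamma2 : (⊤ : Subgroup (K ∗ L)).lowerCentralSeries (n + 2) ≤ T := by
      have heq : (⊤ : Subgroup (K ∗ L)).lowerCentralSeries (n + 2) =
          ⁅(⊤ : Subgroup (K ∗ L)).lowerCentralSeries (n + 1), (⊤ : Subgroup (K ∗ L))⁆ := rfl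
      rw [heq, commutator_le]
      intro g hg f _
      exact hSf (hstruct hg) f
    -- Step 3: conclude
    intro x hx
    rw [Subgroup.mem_inf] at hx
    obtain ⟨hxC, hxG⟩ := hx
    have hxT' : x ∈ gammaK K L (n + 2) ⊔ gammaL K L (n + 2) ⊔ iterComm K L (n + 1) := by
      have h1 := hgamma2 hxG
      rw [hTdef] at h1
      have h2 : Subgroup.normalClosure (gammaK K L (n + 2) : Set (K ∗ L)) ⊔
          Subgroup.normalClosure (gammaL K L (n + 2) : Set (K ∗ L)) ⊔ iterComm K L (n + 1) ≤
          gammaK K L (n + 2) ⊔ gammaL K L (n + 2) ⊔ iterComm K L (n + 1) := by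
        refine sup_le (sup_le ?_ ?_) le_sup_right
        · exact (ncl_gammaK_le K L (n + 2)).trans
            (sup_le (le_sup_left.trans le_sup_left)
              ((iterComm_le_of_le K L (by omega)).trans le_sup_right))
        · exact (ncl_gammaL_le K L (n + 2)).trans
            (sup_le (le_sup_right.trans le_sup_left)
              ((iterComm_le_of_le K L (by omega)).trans le_sup_right))
      exact h2 h1
    obtain ⟨u, hu, v, hv, d, hd, hxeq⟩ :=
      mem_sup_decomp K L (n + 2) (n + 1) (by omega) hxT'
    have hφx : natProj K L x = 1 := by
      rw [← ker_natProj, MonoidHom.mem_ker] at hxC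
      exact hxC
    have hφd : natProj K L d = 1 := by
      have : d ∈ (natProj K L).ker := by
        rw [ker_natProj]
        exact iterComm_le_of_le K L (by omega) hd
      exact MonoidHom.mem_ker.mp this
    have huv : ((u, v) : K × L) = 1 := by
      rw [hxeq, map_mul, map_mul, natProj_inl, natProj_inr, hφd, mul_one] at hφx
      simpa [Prod.mul_def] using hφx
    have hu1 : u = 1 := congrArg Prod.fst huv
    have hv1 : v = 1 := congrArg Prod.snd huv
    rw [hxeq, hu1, hv1, map_one, map_one, one_mul, one_mul]
    exact hd

theorem inf_eq (c : ℕ) (hc : 1 ≤ c) :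
    iterComm K L 0 ⊓ (⊤ : Subgroup (K ∗ L)).lowerCentralSeries c = iterComm K L (c - 1) := by
  obtain ⟨n, rfl⟩ : ∃ n, c = n + 1 := ⟨c - 1, by omega⟩
  simp only [Nat.add_sub_cancel]
  apply le_antisymm (crux K L n)
  exact le_inf (iterComm_le_of_le K L (Nat.zero_le n)) (iterComm_le_gamma K L n)

end Main
end KerIsoAux

set_option maxHeartbeats 1000000 in
/-- The kernel of the induced map
`φ̄_c : F/γ_{c+1}(F) →* (K/γ_{c+1}(K)) × (L/γ_{c+1}(L))` is isomorphic to
`[K,L]^F / [K,L,_{c-1}F]^F`. -/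
theorem ker_induced_map_iso (K L : Type*) [Group K] [Group L] (c : ℕ) (hc : 1 ≤ c)
    (φbar : (K ∗ L) ⧸ (⊤ : Subgroup (K ∗ L)).lowerCentralSeries c →*
        (K ⧸ (⊤ : Subgroup K).lowerCentralSeries c) × (L ⧸ (⊤ : Subgroup L).lowerCentralSeries c))
    (hφbar : ∀ x : K ∗ L,
      φbar (QuotientGroup.mk x) =
        (QuotientGroup.mk ((natProj K L) x).1, QuotientGroup.mk ((natProj K L) x).2)) :
    Nonempty
      (φbar.ker ≃*
        (iterComm K L 0) ⧸ ((iterComm K L (c - 1)).subgroupOf (iterComm K L 0))) := by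
  classical
  open KerIsoAux Subgroup in
  refine Nonempty.intro ?_
  have hΦapp : ∀ x : K ∗ L, φbar.comp (QuotientGroup.mk' ((⊤ : Subgroup (K ∗ L)).lowerCentralSeries c)) x =
      (QuotientGroup.mk ((natProj K L x).1), QuotientGroup.mk ((natProj K L x).2)) :=
    fun x => hφbar x
  have hker1 : iterComm K L 0 ⊔ (⊤ : Subgroup (K ∗ L)).lowerCentralSeries c ≤
      (φbar.comp (QuotientGroup.mk' ((⊤ : Subgroup (K ∗ L)).lowerCentralSeries c))).ker := by
    refine sup_le ?_ ?_
    · intro x hx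
      rw [MonoidHom.mem_ker, hΦapp x]
      have hx1 : natProj K L x = 1 := by
        rw [← ker_natProj] at hx
        exact hx
      rw [hx1]
      simp
    · intro x hx
      rw [MonoidHom.mem_ker]
      have h1 : (QuotientGroup.mk' ((⊤ : Subgroup (K ∗ L)).lowerCentralSeries c)) x = 1 := by
        rwa [QuotientGroup.mk'_apply, QuotientGroup.eq_one_iff]
      show φbar ((QuotientGroup.mk' ((⊤ : Subgroup (K ∗ L)).lowerCentralSeries c)) x) = 1
      rw [h1, map_one]
  have hker2 : (φbar.comp (QuotientGroup.mk' ((⊤ : Subgroup (K ∗ L)).lowerCentralSeries c))).ker ≤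
      iterComm K L 0 ⊔ (⊤ : Subgroup (K ∗ L)).lowerCentralSeries c := by
    intro x hx
    rw [MonoidHom.mem_ker, hΦapp x, Prod.mk_eq_one] at hx
    obtain ⟨h1, h2⟩ := hx
    rw [QuotientGroup.eq_one_iff] at h1 h2
    obtain ⟨z, hz, hxe⟩ := decomp K L x
    rw [hxe]
    refine mul_mem (mul_mem (mem_sup_left hz) (mem_sup_right ?_)) (mem_sup_right ?_)
    · exact gammaK_le_gamma K L c ⟨_, h1, rfl⟩
    · exact gammaL_le_gamma K L c ⟨_, h2, rfl⟩
  have hkerΦ : (φbar.comp (QuotientGroup.mk' ((⊤ : Subgroup (K ∗ L)).lowerCentralSeries c))).ker =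
      iterComm K L 0 ⊔ (⊤ : Subgroup (K ∗ L)).lowerCentralSeries c := le_antisymm hker2 hker1
  have hfker : ((QuotientGroup.mk' ((⊤ : Subgroup (K ∗ L)).lowerCentralSeries c)).comp
        (iterComm K L 0 ⊔ (⊤ : Subgroup (K ∗ L)).lowerCentralSeries c).subtype).ker =
      ((⊤ : Subgroup (K ∗ L)).lowerCentralSeries c).subgroupOf
        (iterComm K L 0 ⊔ (⊤ : Subgroup (K ∗ L)).lowerCentralSeries c) := by
    rw [← MonoidHom.comap_ker, QuotientGroup.ker_mk']
    rfl
  have hfrange : ((QuotientGroup.mk' ((⊤ : Subgroup (K ∗ L)).lowerCentralSeries c)).comp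
        (iterComm K L 0 ⊔ (⊤ : Subgroup (K ∗ L)).lowerCentralSeries c).subtype).range = φbar.ker := by
    rw [MonoidHom.range_comp, Subgroup.range_subtype]
    ext q
    constructor
    · rintro ⟨y, hy, rfl⟩
      exact hker1 hy
    · intro hq
      obtain ⟨x, rfl⟩ := QuotientGroup.mk'_surjective ((⊤ : Subgroup (K ∗ L)).lowerCentralSeries c) q
      have hx : x ∈ (φbar.comp (QuotientGroup.mk' ((⊤ : Subgroup (K ∗ L)).lowerCentralSeries c))).ker := hq
      rw [hkerΦ] at hx
      exact ⟨x, hx, rfl⟩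
  have hinf := inf_eq K L c hc
  have e5 : ((⊤ : Subgroup (K ∗ L)).lowerCentralSeries c).subgroupOf (iterComm K L 0) =
      (iterComm K L (c - 1)).subgroupOf (iterComm K L 0) := by
    ext x
    simp only [Subgroup.mem_subgroupOf]
    constructor
    · intro h
      have h2 : (x : K ∗ L) ∈ iterComm K L 0 ⊓ (⊤ : Subgroup (K ∗ L)).lowerCentralSeries c :=
        Subgroup.mem_inf.mpr ⟨x.2, h⟩
      rw [hinf] at h2
      exact h2
    · intro h
      have h2 : (x : K ∗ L) ∈ iterComm K L 0 ⊓ (⊤ : Subgroup (K ∗ L)).lowerCentralSeries c := by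
        rw [hinf]
        exact h
      exact (Subgroup.mem_inf.mp h2).2
  have e4 := QuotientGroup.quotientInfEquivProdNormalQuotient (iterComm K L 0)
    ((⊤ : Subgroup (K ∗ L)).lowerCentralSeries c)
  have e1 := QuotientGroup.quotientKerEquivRange
    ((QuotientGroup.mk' ((⊤ : Subgroup (K ∗ L)).lowerCentralSeries c)).comp
      (iterComm K L 0 ⊔ (⊤ : Subgroup (K ∗ L)).lowerCentralSeries c).subtype)
  exact (((QuotientGroup.quotientMulEquivOfEq e5.symm).trans e4).trans
    (((QuotientGroup.quotientMulEquivOfEq hfker.symm).trans e1).trans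
      (MulEquiv.subgroupCongr hfrange))).symm
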